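/- Let G be a graph and v ∈ V(G). Then c(G − v) ≤ c(G), where G − v is the induced subgraph of G on V(G)\{v}. -/

import Mathlib

/-- `c(G)`: the number of maximal cliques of a graph `G`. -/
noncomputable def numMaximalCliques {V : Type*} (G : SimpleGraph V) : ℕ :=
  {s : Set V | Maximal (fun t => G.IsClique t) s}.ncard

/-- Let `G` be a graph and `v ∈ V(G)`.  Then `c(G - v) ≤ c(G)`, where `G - v` is the induced
subgraph of `G` on `V(G) \ {v}`. -/
theorem numMaximalCliques_deleteVert_le {V : Type*} [Fintype V] (G : SimpleGraph V) (v : V) :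
    numMaximalCliques (G.induce {x | x ≠ v}) ≤ numMaximalCliques G := by
  classical
  set S : Set V := {x | x ≠ v} with hS
  set G' := G.induce S with hG'
  have himg : ∀ s : Set S, G'.IsClique s → G.IsClique (Subtype.val '' s) := by
    intro s hs x hx y hy hxy
    obtain ⟨a, ha, rfl⟩ := hx
    obtain ⟨b, hb, rfl⟩ := hy
    have hab : a ≠ b := fun h => hxy (by rw [h])
    exact hs ha hb hab
  have hpre : ∀ T : Set V, G.IsClique T → G'.IsClique (Subtype.val ⁻¹' T : Set S) := by
    intro T hT a ha b hb hab
    exact hT ha hb (fun h => hab (Subtype.ext h))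
  have hext : ∀ T₀ : Set V, G.IsClique T₀ →
      ∃ T, Maximal (fun t => G.IsClique t) T ∧ T₀ ⊆ T := by
    intro T₀ h0
    have hfin : {t : Set V | G.IsClique t ∧ T₀ ⊆ t}.Finite := Set.toFinite _
    obtain ⟨T, hT, hmax⟩ := Set.Finite.exists_maximalFor id _ hfin ⟨T₀, h0, subset_rfl⟩
    refine ⟨T, ⟨hT.1, fun t ht hTt => ?_⟩, hT.2⟩
    exact hmax ⟨ht, hT.2.trans hTt⟩ hTt
  set F : Set S → Set V := fun s =>
    if h : G'.IsClique s then Classical.choose (hext _ (himg s h)) else ∅ with hF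
  have hFspec : ∀ s (h : G'.IsClique s),
      Maximal (fun t => G.IsClique t) (F s) ∧ Subtype.val '' s ⊆ F s := by
    intro s h
    simp only [hF, dif_pos h]
    exact Classical.choose_spec (hext _ (himg s h))
  apply Set.ncard_le_ncard_of_injOn F
  · intro s hs
    exact (hFspec s hs.1).1
  · intro s₁ hs₁ s₂ hs₂ heq
    have h1 := hFspec s₁ hs₁.1
    have h2 := hFspec s₂ hs₂.1
    have hclique : G'.IsClique (Subtype.val ⁻¹' (F s₁) : Set S) := hpre _ h1.1.1
    have e1 : s₁ = Subtype.val ⁻¹' (F s₁) := by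
      apply le_antisymm
      · intro a ha
        exact h1.2 ⟨a, ha, rfl⟩
      · exact hs₁.2 hclique (fun a ha => h1.2 ⟨a, ha, rfl⟩)
    have e2 : s₂ = Subtype.val ⁻¹' (F s₁) := by
      rw [← heq] at h2
      apply le_antisymm
      · intro a ha
        exact h2.2 ⟨a, ha, rfl⟩
      · exact hs₂.2 hclique (fun a ha => h2.2 ⟨a, ha, rfl⟩)
    rw [e1, e2]
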